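/- Let v be an odd positive divisor of n ≥ 3, T ⊆ {x, x², ..., x^{v−1}}, and X = T·⟨x^v⟩ ⊆ C_n such that X ∪ X^{(−1)} = C_n \ ⟨x^v⟩ (a disjoint union, i.e., X and X^{(−1)} partition the complement of ⟨x^v⟩). Then Dih(n,X,X) is a directed strongly regular graph with parameters (2n, n−l, (n−l)/2, (n−l)/2 − l, (n−l)/2), where l = n/v. -/

import Mathlib

open scoped Classical

noncomputable def adjMat {V : Type*} [Fintype V] (r : V → V → Prop) : Matrix V V ℤ :=
  Matrix.of fun i j => if r i j then 1 else 0

noncomputable def allOnes (V : Type*) [Fintype V] : Matrix V V ℤ :=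
  Matrix.of fun _ _ => 1

/-- `r` is (the adjacency relation of) a directed strongly regular graph with
parameters `(n, k, μ, lam, t)`. -/
def IsDSRG {V : Type*} [Fintype V] [DecidableEq V] (r : V → V → Prop)
    (n k μ lam t : ℤ) : Prop :=
  (∀ i, ¬ r i i) ∧ ((Fintype.card V : ℤ) = n) ∧
  allOnes V * adjMat r = k • allOnes V ∧
  adjMat r * allOnes V = k • allOnes V ∧
  adjMat r * adjMat r =
    t • (1 : Matrix V V ℤ) + lam • adjMat r + μ • (allOnes V - 1 - adjMat r)

/-- The Cayley digraph relation of `S ⊆ G`: `g → h` iff `g⁻¹ * h ∈ S`. -/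
def cayleyRel {G : Type*} [Group G] (S : Finset G) : G → G → Prop :=
  fun g h => g⁻¹ * h ∈ S

/-- The connection set `X ∪ Yτ ⊆ D_n`, with `C_n` realized additively as `ZMod n`,
`x^a` as `DihedralGroup.r a` and `τ = DihedralGroup.sr 0`. -/
noncomputable def dihSet (n : ℕ) (X Y : Finset (ZMod n)) : Finset (DihedralGroup n) :=
  X.image DihedralGroup.r ∪ Y.image (fun a => DihedralGroup.r a * DihedralGroup.sr 0)

/-- `X̄`, the sum of the elements of `X` in the group ring `ℤ[C_n]`. -/
noncomputable def fbar {n : ℕ} (X : Finset (ZMod n)) : AddMonoidAlgebra ℤ (ZMod n) :=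
  ∑ a ∈ X, AddMonoidAlgebra.single a 1

/-- `X^{(−1)}‾`, the sum of the inverses of the elements of `X` in `ℤ[C_n]`. -/
noncomputable def fbarInv {n : ℕ} (X : Finset (ZMod n)) : AddMonoidAlgebra ℤ (ZMod n) :=
  ∑ a ∈ X, AddMonoidAlgebra.single (-a) 1

/-- `C̄_n`, the sum of all elements of `C_n` in `ℤ[C_n]`. -/
noncomputable def cbar (n : ℕ) [NeZero n] : AddMonoidAlgebra ℤ (ZMod n) :=
  ∑ a : ZMod n, AddMonoidAlgebra.single a 1

namespace DSRGaux
open DihedralGroup Finset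

variable {n : ℕ}

lemma r_injective : Function.Injective (DihedralGroup.r : ZMod n → DihedralGroup n) := by
  intro a b h; injection h

lemma srmul_injective :
    Function.Injective (fun a : ZMod n => DihedralGroup.r a * DihedralGroup.sr 0) := by
  intro a b h
  simp only [r_mul_sr] at h
  injection h with h
  exact sub_right_injective h

lemma inv_r (a : ZMod n) : (DihedralGroup.r a)⁻¹ = DihedralGroup.r (-a) := by
  symm; apply eq_inv_of_mul_eq_one_left
  rw [r_mul_r, neg_add_cancel, ← one_def]

lemma inv_sr (a : ZMod n) : (DihedralGroup.sr a)⁻¹ = DihedralGroup.sr a := by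
  symm; apply eq_inv_of_mul_eq_one_left
  exact sr_mul_self a

lemma mem_dihSet_r {X : Finset (ZMod n)} {a : ZMod n} :
    DihedralGroup.r a ∈ dihSet n X X ↔ a ∈ X := by
  simp only [dihSet, mem_union, mem_image]
  constructor
  · rintro (⟨b, hb, h⟩ | ⟨b, hb, h⟩)
    · injection h with h; rwa [← h]
    · rw [r_mul_sr] at h; exact absurd h (by simp)
  · intro h; exact Or.inl ⟨a, h, rfl⟩

lemma mem_dihSet_sr {X : Finset (ZMod n)} {b : ZMod n} :
    DihedralGroup.sr b ∈ dihSet n X X ↔ -b ∈ X := by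
  simp only [dihSet, mem_union, mem_image]
  constructor
  · rintro (⟨a, ha, h⟩ | ⟨a, ha, h⟩)
    · exact absurd h (by simp)
    · rw [r_mul_sr] at h; injection h with h
      rw [← h]; simpa using ha
  · intro h
    refine Or.inr ⟨-b, h, ?_⟩
    rw [r_mul_sr]; ring_nf

lemma sum_ite_mul_card {V : Type*} [Fintype V] (P Q : V → Prop) :
    ∑ m : V, (if P m then (1:ℤ) else 0) * (if Q m then 1 else 0)
      = ((Finset.univ.filter (fun m => P m ∧ Q m)).card : ℤ) := by
  rw [← Finset.sum_boole]
  refine Finset.sum_congr rfl fun m _ => ?_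
  by_cases h1 : P m <;> by_cases h2 : Q m <;> simp [h1, h2]

lemma mem_negX {X : Finset (ZMod n)} {y : ZMod n} :
    y ∈ X.image (fun a => -a) ↔ -y ∈ X := by
  simp only [mem_image]
  constructor
  · rintro ⟨x, hx, rfl⟩; simpa using hx
  · intro h; exact ⟨-y, h, by simp⟩

end DSRGaux

open DihedralGroup Finset DSRGaux

/-- Construction. Let `v` be an odd positive divisor of `n ≥ 3`,
`T ⊆ {x,…,x^{v−1}}` and `X = T·⟨x^v⟩` such that `X` and `X^{(−1)}` partition
`C_n \ ⟨x^v⟩`. Then `Dih(n,X,X)` is a DSRG with parameters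
`(2n, n−l, (n−l)/2, (n−l)/2 − l, (n−l)/2)` where `l = n/v`. -/
theorem construction_odd (n v : ℕ) [NeZero n] (hn : 3 ≤ n) (hv : v ∣ n) (hvodd : Odd v)
    (T : Finset ℕ) (hT : ∀ a ∈ T, 1 ≤ a ∧ a < v)
    (X : Finset (ZMod n))
    (hX : X = (T ×ˢ Finset.range (n / v)).image
      (fun p : ℕ × ℕ => ((p.1 + p.2 * v : ℕ) : ZMod n)))
    (hdisj : Disjoint X (X.image (fun a => -a)))
    (hcover : X ∪ X.image (fun a => -a) =
      Finset.univ \ ((Finset.range (n / v)).image (fun j : ℕ => ((j * v : ℕ) : ZMod n)))) :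
    IsDSRG (cayleyRel (dihSet n X X)) (2 * (n : ℤ))
      ((n : ℤ) - (n / v : ℕ))
      (((n : ℤ) - (n / v : ℕ)) / 2)
      (((n : ℤ) - (n / v : ℕ)) / 2 - (n / v : ℕ))
      (((n : ℤ) - (n / v : ℕ)) / 2) := by
  have hvpos : 0 < v := hvodd.pos
  have hnpos : 0 < n := Nat.pos_of_ne_zero (NeZero.ne n)
  have hvn : v ≤ n := Nat.le_of_dvd hnpos hv
  have hlpos : 0 < n / v := Nat.div_pos hvn hvpos
  have hlv : (n / v) * v = n := Nat.div_mul_cancel hv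
  set l : ℕ := n / v with hl
  set S : Finset (DihedralGroup n) := dihSet n X X with hS
  set Hs : Finset (ZMod n) := (Finset.range l).image (fun j : ℕ => ((j * v : ℕ) : ZMod n))
    with hHs
  set negX : Finset (ZMod n) := X.image (fun a => -a) with hnegX
  -- stability of X under adding v
  have stepAdd : ∀ c ∈ X, c + (v : ZMod n) ∈ X := by
    intro c hc
    rw [hX] at hc ⊢
    simp only [mem_image, mem_product, mem_range, Prod.exists] at hc ⊢
    obtain ⟨a, j, ⟨haT, hj⟩, rfl⟩ := hc
    by_cases hjl : j + 1 < l
    · exact ⟨a, j + 1, ⟨haT, hjl⟩, by push_cast; ring⟩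
    · have hj1 : j + 1 = l := by omega
      refine ⟨a, 0, ⟨haT, hlpos⟩, ?_⟩
      have key : ((j * v + v : ℕ) : ZMod n) = 0 := by
        have h2 : j * v + v = n := by
          have : (j + 1) * v = n := by rw [hj1]; exact hlv
          linarith [this]
        rw [h2]; exact ZMod.natCast_self n
      push_cast at key ⊢
      linear_combination -key
  have stepSub : ∀ c ∈ X, c - (v : ZMod n) ∈ X := by
    intro c hc
    rw [hX] at hc ⊢
    simp only [mem_image, mem_product, mem_range, Prod.exists] at hc ⊢
    obtain ⟨a, j, ⟨haT, hj⟩, rfl⟩ := hc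
    cases j with
    | zero =>
        refine ⟨a, l - 1, ⟨haT, by omega⟩, ?_⟩
        have key : (((l - 1) * v + v : ℕ) : ZMod n) = 0 := by
          have h2 : (l - 1) * v + v = n := by
            have : (l - 1) * v = n - v := by
              rw [Nat.sub_mul, one_mul, hlv]
            omega
          rw [h2]; exact ZMod.natCast_self n
        push_cast at key ⊢
        linear_combination key
    | succ j' =>
        refine ⟨a, j', ⟨haT, by omega⟩, ?_⟩
        push_cast; ring
  have stabIff : ∀ c : ZMod n, c + (v : ZMod n) ∈ X ↔ c ∈ X := by
    intro c
    constructor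
    · intro h; have := stepSub _ h; simpa using this
    · exact stepAdd c
  have stabMul : ∀ (j : ℕ) (c : ZMod n), c + ((j * v : ℕ) : ZMod n) ∈ X ↔ c ∈ X := by
    intro j
    induction j with
    | zero => intro c; simp
    | succ j' ih =>
        intro c
        have he : c + (((j' + 1) * v : ℕ) : ZMod n)
            = (c + ((j' * v : ℕ) : ZMod n)) + (v : ZMod n) := by push_cast; ring
        rw [he, stabIff, ih]
  have stabHs : ∀ c : ZMod n, ∀ d ∈ Hs, (c - d ∈ X ↔ c ∈ X) := by
    intro c d hd
    rw [hHs] at hd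
    simp only [mem_image, mem_range] at hd
    obtain ⟨j, hj, rfl⟩ := hd
    have := stabMul j (c - ((j * v : ℕ) : ZMod n))
    simpa using this.symm
  -- cardinalities
  have cardHs : Hs.card = l := by
    rw [hHs, Finset.card_image_of_injOn, Finset.card_range]
    intro j1 h1 j2 h2 heq
    simp only [Finset.coe_range, Set.mem_Iio] at h1 h2
    have hb : ∀ j : ℕ, j < l → j * v < n := by
      intro j hj
      calc j * v < (j + 1) * v := by nlinarith
        _ ≤ l * v := Nat.mul_le_mul_right v hj
        _ = n := hlv
    have := congrArg ZMod.val heq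
    rw [ZMod.val_cast_of_lt (hb j1 h1), ZMod.val_cast_of_lt (hb j2 h2)] at this
    exact Nat.eq_of_mul_eq_mul_right hvpos this
  have cardNegX : negX.card = X.card :=
    Finset.card_image_of_injective _ neg_injective
  have hXcard : 2 * X.card = n - l := by
    have h1 : (X ∪ negX).card = X.card + negX.card := card_union_of_disjoint hdisj
    rw [hcover] at h1
    have h3 : (Finset.univ \ Hs).card = n - l := by
      rw [Finset.card_sdiff_of_subset (Finset.subset_univ _), cardHs]
      congr 1
      simp [ZMod.card]
    omega
  have kint : (X.card : ℤ) = ((n : ℤ) - (l : ℕ)) / 2 := by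
    have hln : l ≤ n := Nat.div_le_self n v
    have h2 : ((n : ℤ) - (l : ℕ)) = 2 * X.card := by
      have := hXcard
      omega
    rw [h2, Int.mul_ediv_cancel_left _ two_ne_zero]
  -- 0 ∉ X
  have h0X : (0 : ZMod n) ∉ X := by
    intro h0
    have h0Hs : (0 : ZMod n) ∈ Hs := by
      rw [hHs]
      simp only [mem_image, mem_range]
      exact ⟨0, hlpos, by simp⟩
    have : (0 : ZMod n) ∈ X ∪ negX := Finset.mem_union_left _ h0
    rw [hcover] at this
    simp only [Finset.mem_sdiff] at this
    exact this.2 h0Hs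
  -- L2
  have L2 : ∀ c : ZMod n, (Hs.filter (fun d => c - d ∈ X)).card
      = if c ∈ X then l else 0 := by
    intro c
    by_cases hc : c ∈ X
    · rw [if_pos hc, Finset.filter_true_of_mem, cardHs]
      intro d hd; exact (stabHs c d hd).mpr hc
    · rw [if_neg hc, Finset.card_eq_zero, Finset.filter_false_of_mem]
      intro d hd h; exact hc ((stabHs c d hd).mp h)
  -- main counting lemma
  have Mcard : ∀ c : ZMod n,
      ((X.filter (fun a => c - a ∈ X ∪ negX)).card : ℤ)
        = (X.card : ℤ) - (l : ℕ) * (if c ∈ X then 1 else 0) := by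
    intro c
    have hcond : X.filter (fun a => c - a ∈ X ∪ negX)
        = X.filter (fun a => ¬ (c - a ∈ Hs)) := by
      apply Finset.filter_congr
      intro a _
      rw [hcover]
      simp
    have hsplit : (X.filter (fun a => ¬ (c - a ∈ Hs))) = X \ X.filter (fun a => c - a ∈ Hs) :=
      Finset.filter_not _ _
    have hbij : (X.filter (fun a => c - a ∈ Hs)).card
        = (Hs.filter (fun d => c - d ∈ X)).card := by
      apply Finset.card_nbij' (fun a => c - a) (fun d => c - d)
      · intro a ha; simp only [mem_coe, mem_filter] at ha ⊢
        exact ⟨ha.2, by simpa using ha.1⟩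
      · intro d hd; simp only [mem_coe, mem_filter] at hd ⊢
        exact ⟨hd.2, by simpa using hd.1⟩
      · intro a _; ring
      · intro d _; ring
    have hsub : (X.filter (fun a => c - a ∈ Hs)).card ≤ X.card :=
      Finset.card_le_card (Finset.filter_subset _ _)
    rw [hcond, hsplit, Finset.card_sdiff_of_subset (Finset.filter_subset _ _), Nat.cast_sub hsub,
      hbij, L2]
    split_ifs <;> push_cast <;> ring
  -- counting walks in S
  have hAB : Disjoint (X.image DihedralGroup.r)
      (X.image (fun a => DihedralGroup.r a * DihedralGroup.sr 0)) := by
    rw [Finset.disjoint_left]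
    rintro x hx hx'
    simp only [mem_image] at hx hx'
    obtain ⟨a, _, rfl⟩ := hx
    obtain ⟨b, _, hb⟩ := hx'
    rw [r_mul_sr] at hb
    exact absurd hb (by simp)
  have memS : ∀ x : DihedralGroup n, x ∈ S ↔
      (∃ a ∈ X, DihedralGroup.r a = x) ∨
      (∃ a ∈ X, DihedralGroup.r a * DihedralGroup.sr 0 = x) := by
    intro x
    rw [hS]
    simp [dihSet, Finset.mem_union, Finset.mem_image]
  have memNegX : ∀ y : ZMod n, y ∈ negX ↔ -y ∈ X := by
    intro y; exact mem_negX
  have Scount : ∀ z : DihedralGroup n,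
      ((S.filter (fun s => s⁻¹ * z ∈ S)).card : ℤ)
        = (X.card : ℤ) - (l : ℕ) * (if z ∈ S then 1 else 0) := by
    intro z
    cases z with
    | r c =>
        have key : S.filter (fun s => s⁻¹ * DihedralGroup.r c ∈ S)
            = (X.filter (fun a => c - a ∈ X)).image DihedralGroup.r
              ∪ (X.filter (fun a => c - a ∈ negX)).image
                  (fun a => DihedralGroup.r a * DihedralGroup.sr 0) := by
          ext x
          simp only [Finset.mem_filter, Finset.mem_union, Finset.mem_image]
          constructor
          · rintro ⟨hxS, hPx⟩
            rcases (memS x).mp hxS with ⟨a, ha, rfl⟩ | ⟨a, ha, rfl⟩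
            · left
              rw [DSRGaux.inv_r, r_mul_r, hS, mem_dihSet_r, neg_add_eq_sub] at hPx
              exact ⟨a, ⟨ha, hPx⟩, rfl⟩
            · right
              rw [r_mul_sr, DSRGaux.inv_sr, sr_mul_r, hS, mem_dihSet_sr] at hPx
              refine ⟨a, ⟨ha, ?_⟩, rfl⟩
              refine (memNegX _).mpr ?_
              convert hPx using 2
              ring
          · rintro (⟨a, ⟨ha, hc⟩, rfl⟩ | ⟨a, ⟨ha, hc⟩, rfl⟩)
            · refine ⟨(memS _).mpr (Or.inl ⟨a, ha, rfl⟩), ?_⟩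
              rw [DSRGaux.inv_r, r_mul_r, hS, mem_dihSet_r, neg_add_eq_sub]
              exact hc
            · refine ⟨(memS _).mpr (Or.inr ⟨a, ha, rfl⟩), ?_⟩
              rw [r_mul_sr, DSRGaux.inv_sr, sr_mul_r, hS, mem_dihSet_sr]
              have := (memNegX _).mp hc
              convert this using 2
              ring
        rw [key, card_union_of_disjoint
            (hAB.mono (Finset.image_subset_image (Finset.filter_subset _ _))
              (Finset.image_subset_image (Finset.filter_subset _ _))),
          Finset.card_image_of_injective _ r_injective,
          Finset.card_image_of_injective _ srmul_injective]
        have hunion : X.filter (fun a => c - a ∈ X) ∪ X.filter (fun a => c - a ∈ negX)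
            = X.filter (fun a => c - a ∈ X ∪ negX) := by
          ext a
          simp only [Finset.mem_union, Finset.mem_filter]
          tauto
        have hdisj2 : Disjoint (X.filter (fun a => c - a ∈ X))
            (X.filter (fun a => c - a ∈ negX)) := by
          rw [Finset.disjoint_left]
          intro a ha ha'
          simp only [mem_filter] at ha ha'
          exact Finset.disjoint_left.mp hdisj ha.2 ha'.2
        have hM := Mcard c
        rw [← hunion, card_union_of_disjoint hdisj2] at hM
        push_cast at hM ⊢
        rw [hM]
        congr 1
        have hiff : (DihedralGroup.r c ∈ S) ↔ c ∈ X := by rw [hS, mem_dihSet_r]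
        simp only [hiff]
    | sr c =>
        have key : S.filter (fun s => s⁻¹ * DihedralGroup.sr c ∈ S)
            = (X.filter (fun a => (-c) - a ∈ X)).image DihedralGroup.r
              ∪ (X.filter (fun a => (-c) - a ∈ negX)).image
                  (fun a => DihedralGroup.r a * DihedralGroup.sr 0) := by
          ext x
          simp only [Finset.mem_filter, Finset.mem_union, Finset.mem_image]
          constructor
          · rintro ⟨hxS, hPx⟩
            rcases (memS x).mp hxS with ⟨a, ha, rfl⟩ | ⟨a, ha, rfl⟩
            · left
              rw [DSRGaux.inv_r, r_mul_sr, hS, mem_dihSet_sr] at hPx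
              refine ⟨a, ⟨ha, ?_⟩, rfl⟩
              convert hPx using 1
              ring
            · right
              rw [r_mul_sr, DSRGaux.inv_sr, sr_mul_sr, hS, mem_dihSet_r] at hPx
              refine ⟨a, ⟨ha, ?_⟩, rfl⟩
              refine (memNegX _).mpr ?_
              convert hPx using 1
              ring
          · rintro (⟨a, ⟨ha, hc⟩, rfl⟩ | ⟨a, ⟨ha, hc⟩, rfl⟩)
            · refine ⟨(memS _).mpr (Or.inl ⟨a, ha, rfl⟩), ?_⟩
              rw [DSRGaux.inv_r, r_mul_sr, hS, mem_dihSet_sr]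
              convert hc using 1
              ring
            · refine ⟨(memS _).mpr (Or.inr ⟨a, ha, rfl⟩), ?_⟩
              rw [r_mul_sr, DSRGaux.inv_sr, sr_mul_sr, hS, mem_dihSet_r]
              have := (memNegX _).mp hc
              convert this using 1
              ring
        rw [key, card_union_of_disjoint
            (hAB.mono (Finset.image_subset_image (Finset.filter_subset _ _))
              (Finset.image_subset_image (Finset.filter_subset _ _))),
          Finset.card_image_of_injective _ r_injective,
          Finset.card_image_of_injective _ srmul_injective]
        have hunion : X.filter (fun a => (-c) - a ∈ X) ∪ X.filter (fun a => (-c) - a ∈ negX)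
            = X.filter (fun a => (-c) - a ∈ X ∪ negX) := by
          ext a
          simp only [Finset.mem_union, Finset.mem_filter]
          tauto
        have hdisj2 : Disjoint (X.filter (fun a => (-c) - a ∈ X))
            (X.filter (fun a => (-c) - a ∈ negX)) := by
          rw [Finset.disjoint_left]
          intro a ha ha'
          simp only [mem_filter] at ha ha'
          exact Finset.disjoint_left.mp hdisj ha.2 ha'.2
        have hM := Mcard (-c)
        rw [← hunion, card_union_of_disjoint hdisj2] at hM
        push_cast at hM ⊢
        rw [hM]
        congr 1
        have hiff : (DihedralGroup.sr c ∈ S) ↔ -c ∈ X := by rw [hS, mem_dihSet_sr]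
        simp only [hiff]
  -- card of S
  have cardS : (S.card : ℤ) = (n : ℤ) - (l : ℕ) := by
    have h1 : S.card = 2 * X.card := by
      rw [hS]
      show ((X.image DihedralGroup.r ∪
        X.image (fun a => DihedralGroup.r a * DihedralGroup.sr 0))).card = _
      rw [card_union_of_disjoint hAB,
        Finset.card_image_of_injective _ r_injective,
        Finset.card_image_of_injective _ srmul_injective]
      ring
    have hln : l ≤ n := Nat.div_le_self n v
    have := hXcard
    omega
  -- now assemble
  refine ⟨?_, ?_, ?_, ?_, ?_⟩
  · -- irreflexive
    intro i hi
    unfold cayleyRel at hi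
    rw [inv_mul_cancel, one_def, hS, mem_dihSet_r] at hi
    exact h0X hi
  · rw [DihedralGroup.card]; push_cast; ring
  · -- allOnes * adjMat
    ext i j
    rw [Matrix.mul_apply]
    have hentry : ∀ m : DihedralGroup n,
        allOnes (DihedralGroup n) i m * adjMat (cayleyRel S) m j
          = if m⁻¹ * j ∈ S then (1:ℤ) else 0 := by
      intro m
      by_cases h : m⁻¹ * j ∈ S <;> simp [allOnes, adjMat, cayleyRel, h]
    rw [Finset.sum_congr rfl (fun m _ => hentry m), Finset.sum_boole]
    have hb : (Finset.univ.filter (fun m : DihedralGroup n => m⁻¹ * j ∈ S)).card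
        = S.card := by
      apply Finset.card_nbij' (fun m => m⁻¹ * j) (fun s => j * s⁻¹)
      · intro m hm; simp only [mem_coe, mem_filter] at hm; exact hm.2
      · intro s hs; simp only [mem_coe, mem_filter, Finset.mem_univ, true_and]
        simpa [mul_assoc] using hs
      · intro m _; simp [mul_assoc]
      · intro s _; simp [mul_assoc]
    rw [hb]
    simp only [Matrix.smul_apply, allOnes, Matrix.of_apply, smul_eq_mul, mul_one]
    exact cardS
  · -- adjMat * allOnes
    ext i j
    rw [Matrix.mul_apply]
    have hentry : ∀ m : DihedralGroup n,
        adjMat (cayleyRel S) i m * allOnes (DihedralGroup n) m j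
          = if i⁻¹ * m ∈ S then (1:ℤ) else 0 := by
      intro m
      by_cases h : i⁻¹ * m ∈ S <;> simp [allOnes, adjMat, cayleyRel, h]
    rw [Finset.sum_congr rfl (fun m _ => hentry m), Finset.sum_boole]
    have hb : (Finset.univ.filter (fun m : DihedralGroup n => i⁻¹ * m ∈ S)).card
        = S.card := by
      apply Finset.card_nbij' (fun m => i⁻¹ * m) (fun s => i * s)
      · intro m hm; simp only [mem_coe, mem_filter] at hm; exact hm.2
      · intro s hs; simp only [mem_coe, mem_filter, Finset.mem_univ, true_and]
        simpa [← mul_assoc] using hs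
      · intro m _; simp [← mul_assoc]
      · intro s _; simp [← mul_assoc]
    rw [hb]
    simp only [Matrix.smul_apply, allOnes, Matrix.of_apply, smul_eq_mul, mul_one]
    exact cardS
  · -- the main identity
    ext i j
    rw [Matrix.mul_apply]
    have hentry : ∀ m : DihedralGroup n,
        adjMat (cayleyRel S) i m * adjMat (cayleyRel S) m j
          = if (i⁻¹ * m ∈ S ∧ m⁻¹ * j ∈ S) then (1:ℤ) else 0 := by
      intro m
      by_cases h1 : i⁻¹ * m ∈ S <;> by_cases h2 : m⁻¹ * j ∈ S <;>
        simp [allOnes, adjMat, cayleyRel, h1, h2]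
    rw [Finset.sum_congr rfl (fun m _ => hentry m), Finset.sum_boole]
    have hb : (Finset.univ.filter
          (fun m : DihedralGroup n => i⁻¹ * m ∈ S ∧ m⁻¹ * j ∈ S)).card
        = (S.filter (fun s => s⁻¹ * (i⁻¹ * j) ∈ S)).card := by
      apply Finset.card_nbij' (fun m => i⁻¹ * m) (fun s => i * s)
      · intro m hm
        simp only [mem_coe, mem_filter, Finset.mem_univ, true_and] at hm ⊢
        refine ⟨hm.1, ?_⟩
        have he : (i⁻¹ * m)⁻¹ * (i⁻¹ * j) = m⁻¹ * j := by group
        rw [he]; exact hm.2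
      · intro s hs
        simp only [mem_coe, mem_filter, Finset.mem_univ, true_and] at hs ⊢
        constructor
        · simpa [← mul_assoc] using hs.1
        · have he : (i * s)⁻¹ * j = s⁻¹ * (i⁻¹ * j) := by group
          rw [he]; exact hs.2
      · intro m _; simp [← mul_assoc]
      · intro s _; simp [← mul_assoc]
    rw [hb, Scount (i⁻¹ * j)]
    -- RHS
    have hij : (i = j) ↔ (i⁻¹ * j = 1) := inv_mul_eq_one.symm
    have h1S : (1 : DihedralGroup n) ∉ S := by
      rw [one_def, hS, mem_dihSet_r]
      exact h0X
    simp only [Matrix.add_apply, Matrix.smul_apply, Matrix.sub_apply, Matrix.one_apply,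
      allOnes, adjMat, Matrix.of_apply, smul_eq_mul, cayleyRel]
    by_cases hz : i⁻¹ * j ∈ S
    · have hne : ¬ (i = j) := by
        intro h; rw [hij] at h; rw [h] at hz; exact h1S hz
      simp only [hz, hne, if_true, if_false]
      push_cast [kint]
      ring
    · by_cases he : i = j
      · simp only [hz, he, if_true, if_false]
        push_cast [kint]
        ring
      · simp only [hz, he, if_true, if_false]
        push_cast [kint]
        ring
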